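/- Energy error of the EKahan scheme for a homogeneous cubic Hamiltonian: let M and Q be real d×d matrices with M symmetric and Q skew-symmetric, let C be a symmetric trilinear form on ℝ^d with associated homogeneous cubic U(z) = C(z,z,z) and gradient ∇U determined by ⟨∇U(z), v⟩ = 3C(z,z,v), and let H(z) = (1/2)zᵀMz + U(z). If h ∈ ℝ and x, x' ∈ ℝ^d satisfy the EKahan step x' = exp(hQM)·x + h·φ(hQM)·Q·(−(1/2)∇U(x) + 2∇U((x+x')/2) − (1/2)∇U(x')), then H(x') − H(x) = U(x' − x). -/

import Mathlib

open Matrix MeasureTheory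
open NormedSpace

/-- `phi V = ∫₀¹ exp((1-τ)V) dτ`, the integral taken entrywise. -/
noncomputable def phi {d : ℕ} (V : Matrix (Fin d) (Fin d) ℝ) :
    Matrix (Fin d) (Fin d) ℝ :=
  Matrix.of fun i j => ∫ τ in (0:ℝ)..1, NormedSpace.exp ((1 - τ) • V) i j

variable {d : ℕ}

section norminst
attribute [local instance] Matrix.linftyOpNormedRing Matrix.linftyOpNormedAlgebra

theorem cont_exp_line (V : Matrix (Fin d) (Fin d) ℝ) :
    Continuous fun τ : ℝ => exp ((1 - τ) • V) :=
  exp_continuous.comp (((continuous_const.sub continuous_id)).smul continuous_const)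

theorem cont_entry {f : ℝ → Matrix (Fin d) (Fin d) ℝ} (hf : Continuous f)
    (i j : Fin d) : Continuous fun τ => f τ i j :=
  (continuous_apply j).comp ((continuous_apply i).comp hf)

theorem phi_mul (V B : Matrix (Fin d) (Fin d) ℝ) :
    phi V * B = Matrix.of fun i j =>
      ∫ τ in (0:ℝ)..1, (exp ((1 - τ) • V) * B) i j := by
  ext i j
  simp only [phi, Matrix.mul_apply, Matrix.of_apply]
  simp_rw [← intervalIntegral.integral_mul_const]
  rw [← intervalIntegral.integral_finset_sum]
  intro k _
  exact ((cont_entry (cont_exp_line V) i k).mul continuous_const).intervalIntegrable _ _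

theorem mul_phi (B V : Matrix (Fin d) (Fin d) ℝ) :
    B * phi V = Matrix.of fun i j =>
      ∫ τ in (0:ℝ)..1, (B * exp ((1 - τ) • V)) i j := by
  ext i j
  simp only [phi, Matrix.mul_apply, Matrix.of_apply]
  simp_rw [← intervalIntegral.integral_const_mul]
  rw [← intervalIntegral.integral_finset_sum]
  intro k _
  exact (continuous_const.mul (cont_entry (cont_exp_line V) k j)).intervalIntegrable _ _

theorem phi_transpose (V : Matrix (Fin d) (Fin d) ℝ) : (phi V)ᵀ = phi Vᵀ := by
  ext i j
  simp only [phi, Matrix.transpose_apply, Matrix.of_apply]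
  congr 1
  funext τ
  rw [← Matrix.transpose_smul, Matrix.exp_transpose, Matrix.transpose_apply]

theorem hasDerivAt_exp_line (V : Matrix (Fin d) (Fin d) ℝ) (τ : ℝ) :
    HasDerivAt (fun t : ℝ => exp ((1 - t) • V))
      (-(exp ((1 - τ) • V) * V)) τ := by
  have h1 : HasDerivAt (fun t : ℝ => exp (t • V)) (exp ((1 - τ) • V) * V) (1 - τ) :=
    hasDerivAt_exp_smul_const V (1 - τ)
  have h2 : HasDerivAt (fun t : ℝ => 1 - t) (-1) τ := by
    simpa using (hasDerivAt_id τ).const_sub 1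
  have h3 := h1.scomp τ h2
  simp only [neg_one_smul] at h3
  exact h3

theorem phi_mul_self (V : Matrix (Fin d) (Fin d) ℝ) :
    phi V * V = exp V - 1 := by
  rw [phi_mul]
  ext i j
  simp only [Matrix.of_apply]
  have key : ∫ τ in (0:ℝ)..1, (exp ((1 - τ) • V) * V) i j =
      (fun t : ℝ => -(exp ((1 - t) • V) i j)) 1 -
      (fun t : ℝ => -(exp ((1 - t) • V) i j)) 0 := by
    refine intervalIntegral.integral_eq_sub_of_hasDerivAt
        (f := fun t : ℝ => -(exp ((1 - t) • V) i j))
        (f' := fun τ : ℝ => (exp ((1 - τ) • V) * V) i j) ?_ ?_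
    · intro t _
      have hL : HasDerivAt (fun t : ℝ => exp ((1 - t) • V) i j)
          ((-(exp ((1 - t) • V) * V)) i j) t :=
        (Matrix.entryLinearMap ℝ ℝ i j).toContinuousLinearMap.hasFDerivAt.comp_hasDerivAt
          t (hasDerivAt_exp_line V t)
      have hL' := hL.neg
      simp only [Matrix.neg_apply, neg_neg] at hL'
      exact hL'
    · exact (cont_entry ((cont_exp_line V).matrix_mul continuous_const) i j).intervalIntegrable _ _
  rw [key]
  simp [NormedSpace.exp_zero, Matrix.sub_apply, Matrix.one_apply]
  ring

theorem pow_intertwine (P X W : Matrix (Fin d) (Fin d) ℝ) (hc : P * X = W * P) :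
    ∀ n : ℕ, P * X ^ n = W ^ n * P := by
  intro n
  induction n with
  | zero => simp
  | succ n ih => rw [pow_succ, pow_succ, ← mul_assoc, ih, mul_assoc, hc, ← mul_assoc]

theorem exp_intertwine (P X W : Matrix (Fin d) (Fin d) ℝ) (hc : P * X = W * P) :
    P * exp X = exp W * P := by
  simp only [exp_eq_tsum ℝ]
  rw [← Summable.tsum_mul_left P (show Summable (fun n : ℕ => ((n.factorial : ℝ)⁻¹) • X ^ n)
        from expSeries_summable' (𝕂 := ℝ) X),
      ← Summable.tsum_mul_right _ (show Summable (fun n : ℕ => ((n.factorial : ℝ)⁻¹) • W ^ n)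
        from expSeries_summable' (𝕂 := ℝ) W)]
  congr 1
  funext n
  rw [mul_smul_comm, smul_mul_assoc, pow_intertwine P X W hc n]

theorem phi_intertwine (P X W : Matrix (Fin d) (Fin d) ℝ) (hc : P * X = W * P) :
    P * phi X = phi W * P := by
  rw [mul_phi, phi_mul]
  ext i j
  simp only [Matrix.of_apply]
  congr 1
  funext τ
  refine congrFun (congrFun (exp_intertwine P ((1 - τ) • X) ((1 - τ) • W) ?_) i) j
  rw [mul_smul_comm, smul_mul_assoc, hc]

theorem exp_mul_exp_neg (X : Matrix (Fin d) (Fin d) ℝ) :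
    exp X * exp (-X) = 1 := by
  rw [← Matrix.exp_add_of_commute _ _ (Commute.neg_right (Commute.refl X)),
    add_neg_cancel, exp_zero]

theorem exp_neg_mul_exp (X : Matrix (Fin d) (Fin d) ℝ) :
    exp (-X) * exp X = 1 := by
  rw [← Matrix.exp_add_of_commute _ _ (Commute.neg_left (Commute.refl X)),
    neg_add_cancel, exp_zero]

theorem phi_neg (V : Matrix (Fin d) (Fin d) ℝ) :
    phi (-V) = exp (-V) * phi V := by
  rw [mul_phi]
  ext i j
  simp only [phi, Matrix.of_apply]
  have hL : ∫ τ in (0:ℝ)..1, exp ((1 - τ) • (-V)) i j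
      = ∫ τ in (0:ℝ)..1, exp (τ • (-V)) i j := by
    simpa using intervalIntegral.integral_comp_sub_left (a := 0) (b := 1)
      (fun s : ℝ => exp (s • (-V)) i j) 1
  rw [hL]
  congr 1
  funext τ
  have : exp (-V) * exp ((1 - τ) • V) = exp (τ • (-V)) := by
    rw [← Matrix.exp_add_of_commute]
    · congr 1
      module
    · exact Commute.smul_right (Commute.neg_left (Commute.refl V)) _
  rw [this]

theorem mul_self_phi (V : Matrix (Fin d) (Fin d) ℝ) :
    V * phi V = exp V - 1 := by
  rw [phi_intertwine V V V rfl, phi_mul_self]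

theorem phi_phi_neg (B : Matrix (Fin d) (Fin d) ℝ) :
    phi B * phi (-B) * B = phi B - phi (-B) := by
  have h0 : B * (-B) = (-B) * B := by rw [mul_neg, neg_mul]
  have h1 : exp (-B) * B = B * exp (-B) := (exp_intertwine B (-B) (-B) h0).symm
  have hcomm : phi B * exp (-B) = exp (-B) * phi B :=
    (phi_intertwine (exp (-B)) B B h1).symm
  rw [phi_neg]
  calc phi B * (exp (-B) * phi B) * B
      = phi B * (exp (-B) * (phi B * B)) := by simp only [mul_assoc]
    _ = phi B * (exp (-B) * (exp B - 1)) := by rw [phi_mul_self]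
    _ = phi B * (exp (-B) * exp B - exp (-B)) := by rw [mul_sub, mul_one]
    _ = phi B * (1 - exp (-B)) := by rw [exp_neg_mul_exp]
    _ = phi B - phi B * exp (-B) := by rw [mul_sub, mul_one]
    _ = phi B - exp (-B) * phi B := by rw [hcomm]

end norminst

section keys
variable (M Q : Matrix (Fin d) (Fin d) ℝ) (h : ℝ)
  (hM : Mᵀ = M) (hQ : Qᵀ = -Q)

include hM hQ in
theorem hAT : (h • (Q * M))ᵀ = -(h • (M * Q)) := by
  rw [Matrix.transpose_smul, Matrix.transpose_mul, hM, hQ, mul_neg, smul_neg]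

theorem h1 : M * (h • (Q * M)) = (h • (M * Q)) * M := by
  rw [mul_smul_comm, smul_mul_assoc, mul_assoc]

theorem h2' : Q * (h • (M * Q)) = (h • (Q * M)) * Q := by
  rw [mul_smul_comm, smul_mul_assoc, mul_assoc]

include hM hQ in
theorem keyE : (exp (h • (Q * M)))ᵀ * (M * exp (h • (Q * M))) = M := by
  rw [← Matrix.exp_transpose, exp_intertwine _ _ _ (h1 M Q h), hAT M Q h hM hQ,
    ← mul_assoc, exp_neg_mul_exp, one_mul]

include hM hQ in
theorem keyI : (exp (h • (Q * M)))ᵀ * (M * phi (h • (Q * M)))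
    = (phi (h • (Q * M)))ᵀ * M := by
  rw [← Matrix.exp_transpose, phi_intertwine _ _ _ (h1 M Q h), hAT M Q h hM hQ,
    phi_transpose, hAT M Q h hM hQ, phi_neg, mul_assoc]

include hM hQ in
theorem keyIV : (exp (h • (Q * M)))ᵀ - 1 = -(h • ((phi (h • (Q * M)))ᵀ * (M * Q))) := by
  rw [← Matrix.exp_transpose, ← phi_mul_self ((h • (Q * M))ᵀ), ← phi_transpose,
    hAT M Q h hM hQ, mul_neg, mul_smul_comm]

include hM hQ in
theorem keyII : h • (h • (Q * ((phi (h • (Q * M)))ᵀ * (M * phi (h • (Q * M)))) * Q))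
    = h • (phi (h • (Q * M)) * Q) - h • (Q * (phi (h • (Q * M)))ᵀ) := by
  have hB : (h • (Q * M))ᵀ = -(h • (M * Q)) := hAT M Q h hM hQ
  have hnB : -((h • (Q * M))ᵀ) = h • (M * Q) := by rw [hB, neg_neg]
  have e1 : M * phi (h • (Q * M)) = phi (-((h • (Q * M))ᵀ)) * M := by
    rw [hnB]; exact phi_intertwine _ _ _ (h1 M Q h)
  have hQphi : Q * phi (-((h • (Q * M))ᵀ)) = phi (h • (Q * M)) * Q := by
    rw [hnB]; exact phi_intertwine _ _ _ (h2' M Q h)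
  set A := h • (Q * M) with hA
  rw [phi_transpose, e1]
  calc h • (h • (Q * (phi Aᵀ * (phi (-Aᵀ) * M)) * Q))
      = h • (Q * (phi Aᵀ * phi (-Aᵀ) * (h • (M * Q)))) := by
        simp only [mul_assoc, mul_smul_comm]
    _ = h • (Q * (phi Aᵀ * phi (-Aᵀ) * (-Aᵀ))) := by rw [← hnB, hB, neg_neg]
    _ = -(h • (Q * (phi Aᵀ * phi (-Aᵀ) * Aᵀ))) := by
        simp only [mul_neg, smul_neg]
    _ = -(h • (Q * (phi Aᵀ - phi (-Aᵀ)))) := by rw [phi_phi_neg]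
    _ = h • (Q * phi (-Aᵀ)) - h • (Q * phi Aᵀ) := by
        rw [mul_sub, smul_sub, neg_sub]
    _ = h • (phi A * Q) - h • (Q * phi Aᵀ) := by rw [hQphi]

end keys

theorem dp (P N : Matrix (Fin d) (Fin d) ℝ) (u b : Fin d → ℝ) :
    (P *ᵥ u) ⬝ᵥ (N *ᵥ b) = u ⬝ᵥ ((Pᵀ * N) *ᵥ b) := by
  rw [← Matrix.mulVec_mulVec, Matrix.dotProduct_mulVec u, Matrix.vecMul_transpose]

theorem dpT (N : Matrix (Fin d) (Fin d) ℝ) (a b : Fin d → ℝ) :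
    a ⬝ᵥ (N *ᵥ b) = b ⬝ᵥ (Nᵀ *ᵥ a) := by
  rw [Matrix.dotProduct_mulVec, ← Matrix.mulVec_transpose, dotProduct_comm]

theorem scalar_key (M Q : Matrix (Fin d) (Fin d) ℝ) (h : ℝ)
    (hM : Mᵀ = M) (hQ : Qᵀ = -Q) (x s x' : Fin d → ℝ)
    (hx' : x' = exp (h • (Q * M)) *ᵥ x +
      h • (phi (h • (Q * M)) *ᵥ (Q *ᵥ s))) :
    1/2 * (x' ⬝ᵥ M *ᵥ x') - 1/2 * (x ⬝ᵥ M *ᵥ x) + s ⬝ᵥ (x' - x) = 0 := by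
  have kE := keyE M Q h hM hQ
  have kI := keyI M Q h hM hQ
  have kIV := keyIV M Q h hM hQ
  have kII := keyII M Q h hM hQ
  set A := h • (Q * M) with hA
  set Φ := phi A with hΦ
  set E := exp A with hE
  subst hx'
  simp only [Matrix.mulVec_mulVec, Matrix.mulVec_add, Matrix.mulVec_smul,
    dotProduct_add, add_dotProduct, dotProduct_smul,
    smul_dotProduct, dotProduct_sub, sub_dotProduct,
    smul_eq_mul]
  have kI2 : Eᵀ * (M * (Φ * Q)) = Φᵀ * (M * Q) := by
    rw [← mul_assoc M Φ Q, ← mul_assoc, kI, mul_assoc]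
  have E1 : E *ᵥ x ⬝ᵥ (M * E) *ᵥ x = x ⬝ᵥ M *ᵥ x := by rw [dp, kE]
  have E2 : E *ᵥ x ⬝ᵥ (M * (Φ * Q)) *ᵥ s = x ⬝ᵥ (Φᵀ * (M * Q)) *ᵥ s := by
    rw [dp, kI2]
  have E3 : (Φ * Q) *ᵥ s ⬝ᵥ (M * E) *ᵥ x = x ⬝ᵥ (Φᵀ * (M * Q)) *ᵥ s := by
    rw [dpT, Matrix.transpose_mul, hM, Matrix.mulVec_mulVec, mul_assoc, kI2]
  have hsQ : s ⬝ᵥ (Q * Φᵀ) *ᵥ s = -(s ⬝ᵥ (Φ * Q) *ᵥ s) := by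
    rw [dpT, Matrix.transpose_mul, Matrix.transpose_transpose, hQ, Matrix.mul_neg,
      Matrix.neg_mulVec, dotProduct_neg]
  have hN : (Φ * Q)ᵀ * (M * (Φ * Q)) = -(Q * (Φᵀ * (M * Φ)) * Q) := by
    rw [Matrix.transpose_mul, hQ]
    simp only [neg_mul, mul_assoc]
  have E4 : h * (h * ((Φ * Q) *ᵥ s ⬝ᵥ (M * (Φ * Q)) *ᵥ s)) =
      -(h * (s ⬝ᵥ (Φ * Q) *ᵥ s)) - h * (s ⬝ᵥ (Φ * Q) *ᵥ s) := by
    rw [dp, hN]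
    calc h * (h * (s ⬝ᵥ (-(Q * (Φᵀ * (M * Φ)) * Q)) *ᵥ s))
        = -(s ⬝ᵥ (h • h • (Q * (Φᵀ * (M * Φ)) * Q)) *ᵥ s) := by
          simp only [Matrix.neg_mulVec, dotProduct_neg,
            Matrix.smul_mulVec, dotProduct_smul, smul_eq_mul]
          ring
      _ = -(s ⬝ᵥ (h • (Φ * Q) - h • (Q * Φᵀ)) *ᵥ s) := by rw [kII]
      _ = -(h * (s ⬝ᵥ (Φ * Q) *ᵥ s) - h * (s ⬝ᵥ (Q * Φᵀ) *ᵥ s)) := by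
          simp only [Matrix.sub_mulVec, dotProduct_sub,
            Matrix.smul_mulVec, dotProduct_smul, smul_eq_mul]
      _ = -(h * (s ⬝ᵥ (Φ * Q) *ᵥ s)) - h * (s ⬝ᵥ (Φ * Q) *ᵥ s) := by
          rw [hsQ]; ring
  have E5 : s ⬝ᵥ E *ᵥ x - s ⬝ᵥ x = -(h * (x ⬝ᵥ (Φᵀ * (M * Q)) *ᵥ s)) := by
    have h5 : s ⬝ᵥ E *ᵥ x - s ⬝ᵥ x = s ⬝ᵥ (E - 1) *ᵥ x := by
      simp [Matrix.sub_mulVec, dotProduct_sub, Matrix.one_mulVec]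
    rw [h5, dpT, Matrix.transpose_sub, Matrix.transpose_one, kIV,
      Matrix.neg_mulVec, dotProduct_neg, Matrix.smul_mulVec,
      dotProduct_smul, smul_eq_mul]
  linear_combination (1/2 : ℝ) * E1 + (h/2) * E2 + (h/2) * E3 + (1/2 : ℝ) * E4 + E5

theorem stmt_15 {d : ℕ} (M Q : Matrix (Fin d) (Fin d) ℝ)
    (hM : Mᵀ = M) (hQ : Qᵀ = -Q)
    (C : (Fin d → ℝ) →ₗ[ℝ] (Fin d → ℝ) →ₗ[ℝ] (Fin d → ℝ) →ₗ[ℝ] ℝ)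
    (hC1 : ∀ x y z, C x y z = C y x z)
    (hC2 : ∀ x y z, C x y z = C x z y)
    (U : (Fin d → ℝ) → ℝ) (hU : ∀ z, U z = C z z z)
    (g : (Fin d → ℝ) → (Fin d → ℝ))
    (hg : ∀ z v, g z ⬝ᵥ v = 3 * C z z v)
    (H : (Fin d → ℝ) → ℝ)
    (hH : ∀ z, H z = (1/2 : ℝ) * (z ⬝ᵥ M *ᵥ z) + U z)
    (h : ℝ) (x x' : Fin d → ℝ)
    (hstep : x' = NormedSpace.exp (h • (Q * M)) *ᵥ x +
        h • (phi (h • (Q * M)) *ᵥ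
          (Q *ᵥ ((-(1/2 : ℝ)) • g x + (2 : ℝ) • g ((1/2 : ℝ) • (x + x')) -
            (1/2 : ℝ) • g x')))) :
    H x' - H x = U (x' - x) := by
  set s : Fin d → ℝ := (-(1/2 : ℝ)) • g x + (2 : ℝ) • g ((1/2 : ℝ) • (x + x')) -
    (1/2 : ℝ) • g x' with hs
  have hsv : ∀ v, s ⬝ᵥ v = 3 * C x x' v := by
    intro v
    simp only [hs, add_dotProduct, sub_dotProduct,
      smul_dotProduct, smul_eq_mul, hg, map_add, _root_.map_smul,
      LinearMap.add_apply, LinearMap.smul_apply]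
    linear_combination (3/2 : ℝ) * hC1 x' x v
  have hkey := scalar_key M Q h hM hQ x s x' hstep
  have key3 : C x' x' x' - C x x x - C (x' - x) (x' - x) (x' - x) = s ⬝ᵥ (x' - x) := by
    rw [hsv (x' - x)]
    simp only [map_sub, LinearMap.sub_apply]
    linear_combination hC2 x' x' x + 2 * hC1 x' x x' - hC1 x' x x - hC2 x x x'
  simp only [hH, hU]
  linarith [hkey, key3]
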